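/- Let G be a connected symmetric directed graph whose underlying undirected graph has every two-connected component equal to a single edge or an odd cycle. Then G has no homogeneous cycle, and consequently P_G is simplicial. -/

import Mathlib

open Finset

/-- `ρ(e) = e_{i} - e_{j}` for an arrow `e = (i,j)`. -/
def rho {V : Type*} [DecidableEq V] (e : V × V) : V → ℝ :=
  fun k => (if k = e.1 then (1 : ℝ) else 0) - (if k = e.2 then (1 : ℝ) else 0)

/-- The polytope `P_G` associated with the arrow set `A` of a directed graph. -/
def polyG {V : Type*} [DecidableEq V] (A : Finset (V × V)) : Set (V → ℝ) :=
  convexHull ℝ (rho '' (A : Set (V × V)))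

/-- Connectivity of the underlying undirected graph of the directed graph with arrow set `A`. -/
def GConnected {V : Type*} [DecidableEq V] (A : Finset (V × V)) : Prop :=
  (SimpleGraph.fromRel (fun i j => (i, j) ∈ A)).Connected

/-- Cyclic successor on `Fin l`. -/
def succAt {l : ℕ} (h : 0 < l) (j : Fin l) : Fin l :=
  ⟨((j : ℕ) + 1) % l, Nat.mod_lt _ h⟩

/-- The data of a cycle in a directed graph on the vertex set `V`:
a list of at least two distinct vertices, cyclically ordered, together with, for each
edge of the cycle, a choice of direction (`ε j = true` means the arrow points forwards). -/
structure PreCycle (V : Type*) where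
  l : ℕ
  two_le : 2 ≤ l
  v : Fin l → V
  ε : Fin l → Bool
  inj : Function.Injective v

namespace PreCycle

variable {V : Type*}

theorem pos (C : PreCycle V) : 0 < C.l :=
  lt_of_lt_of_le Nat.zero_lt_two C.two_le

/-- The cyclically next index. -/
def nxt (C : PreCycle V) (j : Fin C.l) : Fin C.l := succAt C.pos j

/-- The arrow of the cycle corresponding to its `j`-th edge. -/
def arrow (C : PreCycle V) (j : Fin C.l) : V × V :=
  if C.ε j then (C.v j, C.v (C.nxt j)) else (C.v (C.nxt j), C.v j)

/-- `C` is a cycle in the directed graph with arrow set `A`. -/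
def IsCycleIn [DecidableEq V] (C : PreCycle V) (A : Finset (V × V)) : Prop :=
  (∀ j, C.arrow j ∈ A) ∧ Function.Injective C.arrow

/-- A cycle is homogeneous if it has as many forward arrows as backward arrows. -/
def Homogeneous (C : PreCycle V) : Prop :=
  2 * (Finset.univ.filter fun j => C.ε j = true).card = C.l

/-- A directed cycle: all arrows point in the direction of traversal. -/
def IsDirected (C : PreCycle V) : Prop := ∀ j, C.ε j = true

/-- The defining property of the function `μ_C` attached to a homogeneous cycle `C`
(here recorded as a function of the position along the cycle; since the vertices of the
cycle are distinct this is the same as a function on the cycle vertices):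
it is nonnegative, decreases by `1` along forward arrows, increases by `1` along
backward arrows, and has minimum value `0`. -/
def IsMu (C : PreCycle V) (μ : Fin C.l → ℤ) : Prop :=
  (∀ j, 0 ≤ μ j) ∧ (∀ j, μ (C.nxt j) = if C.ε j then μ j - 1 else μ j + 1) ∧ (∃ j, μ j = 0)

end PreCycle

/-- Every arrow of the directed graph with arrow set `A` lies in a directed cycle. -/
def EveryArrowInDirCycle {V : Type*} [DecidableEq V] (A : Finset (V × V)) : Prop :=
  ∀ e ∈ A, ∃ C : PreCycle V, C.IsCycleIn A ∧ C.IsDirected ∧ ∃ j, C.arrow j = e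

/-- The dimension of a subset of `ℝ^V` (the dimension of its affine hull). -/
noncomputable def pdim {V : Type*} (s : Set (V → ℝ)) : ℕ :=
  Module.finrank ℝ (vectorSpan ℝ s)

/-- `F` is a facet of the polytope `P`: a nonempty exposed face of codimension one. -/
def IsFacetOf {V : Type*} (F P : Set (V → ℝ)) : Prop :=
  IsExposed ℝ P F ∧ F.Nonempty ∧ pdim F + 1 = pdim P

/-- A polytope is simplicial if the vertices of every facet are affinely independent. -/
def Simplicial {V : Type*} (P : Set (V → ℝ)) : Prop :=
  ∀ F : Set (V → ℝ), IsFacetOf F P →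
    AffineIndependent ℝ (fun x : (F.extremePoints ℝ) => (x : V → ℝ))

/-- The lattice `ℤ^V ∩ {x : Σ x_i = 0}`, as a subset of `ℝ^V`. -/
def latticeSet (V : Type*) [Fintype V] : Set (V → ℝ) :=
  {x | (∀ i, ∃ z : ℤ, x i = (z : ℝ)) ∧ ∑ i, x i = 0}

/-- The set of integer points of `ℝ^V`. -/
def intLat (V : Type*) : Set (V → ℝ) :=
  {x | ∀ i, ∃ z : ℤ, x i = (z : ℝ)}

/-- `W` is a `ℤ`-basis of (the additive group generated by) `L`. -/
def IsZBasisOf {V : Type*} (W L : Set (V → ℝ)) : Prop :=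
  W ⊆ L ∧ LinearIndependent ℤ (fun x : W => (x : V → ℝ)) ∧
    L ⊆ (Submodule.span ℤ W : Set (V → ℝ))

/-- There is a directed path of length `n` from `i` to `j` in the directed graph `A`. -/
def HasDPath {V : Type*} (A : Finset (V × V)) (i j : V) (n : ℕ) : Prop :=
  ∃ f : Fin (n + 1) → V, f 0 = i ∧ f (Fin.last n) = j ∧
    ∀ k : Fin n, (f k.castSucc, f k.succ) ∈ A

/-- The underlying undirected graph of `A` contains an even cycle. -/
def HasEvenCycle {V : Type*} [DecidableEq V] (A : Finset (V × V)) : Prop :=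
  ∃ C : PreCycle V, 3 ≤ C.l ∧ Even C.l ∧
    ∀ j, (C.v j, C.v (C.nxt j)) ∈ A ∨ (C.v (C.nxt j), C.v j) ∈ A

/-- A subgraph is two-connected if it has at least two vertices and removing any single
vertex leaves it connected. -/
def TwoConn {W : Type*} (G : SimpleGraph W) (H : G.Subgraph) : Prop :=
  2 ≤ H.verts.ncard ∧ ∀ w : W, ((H.deleteVerts {w}).coe).Connected

/-- A two-connected component: a maximal two-connected subgraph. -/
def IsBlock {W : Type*} (G : SimpleGraph W) (H : G.Subgraph) : Prop :=
  TwoConn G H ∧ ∀ H' : G.Subgraph, TwoConn G H' → H ≤ H' → H' = H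

/-- The subgraph consists of a single edge. -/
def IsSingleEdge {W : Type*} (G : SimpleGraph W) (H : G.Subgraph) : Prop :=
  ∃ (a b : W) (h : G.Adj a b), H = G.subgraphOfAdj h

/-- The subgraph is an odd cycle. -/
def IsOddCycleSub {W : Type*} (G : SimpleGraph W) (H : G.Subgraph) : Prop :=
  ∃ (l : ℕ) (hl : 3 ≤ l) (v : Fin l → W), Odd l ∧ Function.Injective v ∧
    H.verts = Set.range v ∧
    ∀ x y : W, H.Adj x y ↔ ∃ j : Fin l,
      (x = v j ∧ y = v (succAt (by omega) j)) ∨ (y = v j ∧ x = v (succAt (by omega) j))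

/-- The simple graph `G` contains no cycle of even length. -/
def NoEvenCycleSG {W : Type*} (G : SimpleGraph W) : Prop :=
  ¬ ∃ (u : W) (w : G.Walk u u), w.IsCycle ∧ Even w.length


section Helpers

lemma mod_succ_eq {l x : ℕ} (hx : x < l) : (x+1) % l = if x + 1 = l then 0 else x + 1 := by
  split
  · simp [*]
  · exact Nat.mod_eq_of_lt (by omega)

lemma succAt_inj {l : ℕ} (h : 0 < l) : Function.Injective (succAt h) := by
  intro a b hab
  have ha := a.isLt; have hb := b.isLt
  have hv : (a.val + 1) % l = (b.val + 1) % l := congrArg Fin.val hab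
  rw [mod_succ_eq ha, mod_succ_eq hb] at hv
  apply Fin.ext
  split at hv <;> split at hv <;> omega

lemma succAt_bij {l : ℕ} (h : 0 < l) : Function.Bijective (succAt h) :=
  Finite.injective_iff_bijective.mp (succAt_inj h)

lemma succAt_ne {l : ℕ} (h2 : 2 ≤ l) (j : Fin l) : succAt (by omega) j ≠ j := by
  intro hEq
  have hv := congrArg Fin.val hEq
  simp only [succAt] at hv
  rw [mod_succ_eq j.isLt] at hv
  have := j.isLt
  split at hv <;> omega

lemma succAt_succAt_ne {l : ℕ} (h3 : 3 ≤ l) (j : Fin l) :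
    succAt (by omega) (succAt (by omega) j) ≠ j := by
  intro hEq
  have hv := congrArg Fin.val hEq
  have hx := j.isLt
  simp only [succAt] at hv
  have h1 : ((j.val + 1) % l + 1) % l = j.val := hv
  rw [mod_succ_eq hx] at h1
  split at h1
  · rw [mod_succ_eq (by omega)] at h1
    split at h1 <;> omega
  · rw [mod_succ_eq (by omega)] at h1
    split at h1 <;> omega

lemma succAt_iterate {l : ℕ} (h : 0 < l) (j : Fin l) (k : ℕ) :
    (succAt h)^[k] j = ⟨(j.val + k) % l, Nat.mod_lt _ h⟩ := by
  induction k with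
  | zero => apply Fin.ext; simp [Nat.mod_eq_of_lt j.isLt]
  | succ k ih =>
      rw [Function.iterate_succ_apply', ih]
      apply Fin.ext
      show ((j.val + k) % l + 1) % l = (j.val + (k+1)) % l
      rw [Nat.mod_add_mod]
      ring_nf

end Helpers

/-- KEY: a nontrivial linear dependence among the vectors `ρ(e)`, for arrows `e` all lying
on a level set `a e.1 - a e.2 = c ≠ 0`, yields a homogeneous cycle among those arrows. -/
lemma key_cycle {d : ℕ} (a : Fin d → ℝ) (c : ℝ) (hc : c ≠ 0)
    (S : Finset (Fin d × Fin d)) (hSne : S.Nonempty)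
    (hSa : ∀ e ∈ S, a e.1 - a e.2 = c)
    (γ : Fin d × Fin d → ℝ) (hγ : ∀ e ∈ S, γ e ≠ 0)
    (hsum : ∑ e ∈ S, γ e • rho e = (0 : Fin d → ℝ)) :
    ∃ C : PreCycle (Fin d), (∀ j, C.arrow j ∈ S) ∧ Function.Injective C.arrow ∧
      C.Homogeneous := by
  classical
  have hne12 : ∀ e ∈ S, e.1 ≠ e.2 := by
    intro e he h
    exact hc (by rw [← hSa e he, h, sub_self])
  have hpar : ∀ e ∈ S, ∀ e' ∈ S, e'.1 = e.2 → e'.2 = e.1 → False := by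
    intro e he e' he' h1 h2
    have ha1 := hSa e he
    have ha2 := hSa e' he'
    rw [h1, h2] at ha2
    apply hc; linarith
  have heval : ∀ x : Fin d,
      ∑ e ∈ S, γ e * ((if x = e.1 then (1:ℝ) else 0) - (if x = e.2 then 1 else 0)) = 0 := by
    intro x
    have h0 := congrFun hsum x
    simpa [rho, Finset.sum_apply, Pi.smul_apply, smul_eq_mul] using h0
  have hdeg : ∀ (x : Fin d), ∀ e ∈ S, (e.1 = x ∨ e.2 = x) →
      ∃ e' ∈ S, e' ≠ e ∧ (e'.1 = x ∨ e'.2 = x) := by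
    intro x e he hinc
    by_contra hno
    push_neg at hno
    have hx := heval x
    rw [Finset.sum_eq_single e] at hx
    · rcases hinc with h | h
      · have hxne : ¬ (x = e.2) := by
          intro hh; exact hne12 e he (h.trans hh)
        rw [if_pos h.symm, if_neg hxne] at hx
        simp at hx
        exact hγ e he hx
      · have hxne : ¬ (x = e.1) := by
          intro hh; exact hne12 e he (hh ▸ h).symm
        rw [if_neg hxne, if_pos h.symm] at hx
        simp at hx
        exact hγ e he hx
    · intro b hb hbe
      obtain ⟨h1, h2⟩ := hno b hb hbe
      rw [if_neg (fun hh : x = b.1 => h1 hh.symm), if_neg (fun hh : x = b.2 => h2 hh.symm)]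
      ring
    · intro h; exact absurd he h
  obtain ⟨e₀, he₀⟩ := hSne
  -- walk construction
  let St := {se : (Fin d × Fin d) × Fin d // se.1 ∈ S ∧ (se.1.1 = se.2 ∨ se.1.2 = se.2)}
  have hstep : ∀ s : St, ∃ t : St, t.val.1 ≠ s.val.1 ∧
      ((t.val.1.1 = s.val.2 ∧ t.val.1.2 = t.val.2) ∨
       (t.val.1.2 = s.val.2 ∧ t.val.1.1 = t.val.2)) := by
    rintro ⟨⟨e, x⟩, he, hinc⟩
    obtain ⟨e', he', hnee, hinc'⟩ := hdeg x e he hinc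
    by_cases h1 : e'.1 = x
    · exact ⟨⟨(e', e'.2), he', Or.inr rfl⟩, hnee, Or.inl ⟨h1, rfl⟩⟩
    · have h2 : e'.2 = x := hinc'.resolve_left h1
      exact ⟨⟨(e', e'.1), he', Or.inl rfl⟩, hnee, Or.inr ⟨h2, rfl⟩⟩
  choose step hstep1 hstep2 using hstep
  let s₀ : St := ⟨(e₀, e₀.2), he₀, Or.inr rfl⟩
  let traj : ℕ → St := fun n => step^[n] s₀
  let p : ℕ → Fin d := fun n => (traj n).val.2
  let E : ℕ → Fin d × Fin d := fun n => (traj (n+1)).val.1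
  have htraj : ∀ n, traj (n+1) = step (traj n) := fun n => Function.iterate_succ_apply' step n s₀
  have hES : ∀ n, E n ∈ S := fun n => (traj (n+1)).2.1
  have hEnd : ∀ n, ((E n).1 = p n ∧ (E n).2 = p (n+1)) ∨ ((E n).2 = p n ∧ (E n).1 = p (n+1)) := by
    intro n
    have h3 := hstep2 (traj n)
    rw [← htraj n] at h3
    exact h3
  have hEne : ∀ n, E (n+1) ≠ E n := by
    intro n
    have h1 := hstep1 (traj (n+1))
    rw [← htraj (n+1)] at h1
    exact h1
  have hpne : ∀ n, p (n+1) ≠ p n := by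
    intro n
    rcases hEnd n with ⟨h1, h2⟩ | ⟨h1, h2⟩
    · rw [← h1, ← h2]; exact Ne.symm (hne12 _ (hES n))
    · rw [← h1, ← h2]; exact hne12 _ (hES n)
  -- pigeonhole
  have hex : ∃ m, ∃ n, n < m ∧ p n = p m := by
    obtain ⟨i, j, hij, hpij⟩ :=
      Fintype.exists_ne_map_eq_of_card_lt (fun k : Fin (d+1) => p k.val) (by simp)
    rcases lt_or_gt_of_ne hij with h | h
    · exact ⟨j, i, h, hpij⟩
    · exact ⟨i, j, h, hpij.symm⟩
  let m := Nat.find hex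
  obtain ⟨n, hnm, hpnm⟩ : ∃ n, n < m ∧ p n = p m := Nat.find_spec hex
  have hmin : ∀ i j, i < j → j < m → p i ≠ p j := by
    intro i j hij hjm hEq
    exact Nat.find_min hex hjm ⟨i, hij, hEq⟩
  set l := m - n with hldef
  have hl3 : 3 ≤ l := by
    by_contra hlt
    have hl1 : l = 1 ∨ l = 2 := by omega
    rcases hl1 with h | h
    · have hm1 : m = n + 1 := by omega
      rw [hm1] at hpnm
      exact hpne n hpnm.symm
    · have hm2 : m = n + 2 := by omega
      have hp2 : p (n+2) = p n := by rw [← hm2]; exact hpnm.symm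
      rcases hEnd n with ⟨a1, a2⟩ | ⟨a1, a2⟩ <;> rcases hEnd (n+1) with ⟨b1, b2⟩ | ⟨b1, b2⟩
      · exact hpar (E n) (hES n) (E (n+1)) (hES (n+1)) (by rw [b1, a2]) (by rw [b2, hp2, a1])
      · exact hEne n (Prod.ext (by rw [b2, hp2, a1]) (by rw [b1, a2]))
      · exact hEne n (Prod.ext (by rw [b1, a2]) (by rw [b2, hp2, a1]))
      · exact hpar (E (n+1)) (hES (n+1)) (E n) (hES n) (by rw [a2, b1]) (by rw [a1, ← hp2, b2])
  have hl0 : 0 < l := by omega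
  have hlm : n + l = m := by omega
  have hvlt : ∀ k : Fin l, n + k.val < m := by intro k; have := k.isLt; omega
  have hvinj : Function.Injective (fun k : Fin l => p (n + k.val)) := by
    intro k1 k2 h12
    by_contra hkne
    have hkne' : k1.val ≠ k2.val := fun h => hkne (Fin.ext h)
    rcases Nat.lt_or_ge k1.val k2.val with h | h
    · exact hmin (n + k1.val) (n + k2.val) (by omega) (hvlt k2) h12
    · exact hmin (n + k2.val) (n + k1.val) (by omega) (hvlt k1) h12.symm
  let C : PreCycle (Fin d) :=
    { l := l, two_le := by omega, v := fun k : Fin l => p (n + k.val),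
      ε := fun j => decide ((E (n + j.val)).1 = p (n + j.val)), inj := hvinj }
  have hCl : C.l = l := rfl
  have hvdef : ∀ k : Fin l, C.v k = p (n + k.val) := fun k => rfl
  have hvnxt : ∀ j : Fin l, C.v (C.nxt j) = p (n + j.val + 1) := by
    intro j
    show p (n + ((j.val + 1) % l)) = p (n + j.val + 1)
    rcases (by omega : j.val + 1 < l ∨ j.val + 1 = l) with h | h
    · rw [Nat.mod_eq_of_lt h, ← Nat.add_assoc]
    · rw [h, Nat.mod_self]
      have hh : n + j.val + 1 = m := by omega
      rw [hh]
      simpa using hpnm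
  have hεt : ∀ j : Fin l, C.ε j = true ↔ (E (n + j.val)).1 = p (n + j.val) := by
    intro j
    show decide ((E (n + j.val)).1 = p (n + j.val)) = true ↔ _
    exact decide_eq_true_iff
  have harrow : ∀ j : Fin l, C.arrow j = E (n + j.val) := by
    intro j
    have hend := hEnd (n + j.val)
    have hq : p (n + j.val + 1) ≠ p (n + j.val) := hpne _
    unfold PreCycle.arrow
    by_cases hj : (E (n + j.val)).1 = p (n + j.val)
    · rw [if_pos ((hεt j).mpr hj)]
      rcases hend with ⟨h1, h2⟩ | ⟨h1, h2⟩
      · exact (Prod.ext (by rw [hvdef, h1]) (by rw [hvnxt, h2])).symm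
      · exact absurd (h2.symm.trans hj) hq
    · rw [if_neg (fun hh => hj ((hεt j).mp hh))]
      rcases hend with ⟨h1, h2⟩ | ⟨h1, h2⟩
      · exact absurd h1 hj
      · exact (Prod.ext (by rw [hvnxt, h2]) (by rw [hvdef, h1])).symm
  have hmemS : ∀ j, C.arrow j ∈ S := fun j => (harrow j) ▸ hES (n + j.val)
  have hforms : ∀ j : Fin l, (C.arrow j = (C.v j, C.v (C.nxt j))) ∨
      (C.arrow j = (C.v (C.nxt j), C.v j)) := by
    intro j
    unfold PreCycle.arrow
    by_cases h : C.ε j = true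
    · rw [if_pos h]; left; rfl
    · rw [if_neg h]; right; rfl
  have hnxtne : ∀ j : Fin l, C.nxt j ≠ j := fun j => succAt_ne (by omega) j
  have hnn : ∀ j : Fin l, C.nxt (C.nxt j) ≠ j := fun j => succAt_succAt_ne hl3 j
  have hainj : Function.Injective C.arrow := by
    intro j j' hEq
    have h1 := hforms j
    have h2 := hforms j'
    rw [hEq] at h1
    rcases h1 with h1 | h1 <;> rcases h2 with h2 | h2
    · have h := h1.symm.trans h2
      injection h with e1 e2
      exact hvinj e1
    · have h := h1.symm.trans h2
      injection h with e1 e2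
      have q1 : j = C.nxt j' := hvinj e1
      have q2 : C.nxt j = j' := hvinj e2
      exact absurd (by rw [← q1, q2] : C.nxt (C.nxt j') = j') (hnn j')
    · have h := h1.symm.trans h2
      injection h with e1 e2
      have q1 : C.nxt j = j' := hvinj e1
      have q2 : j = C.nxt j' := hvinj e2
      exact absurd (by rw [← q2, q1] : C.nxt (C.nxt j') = j') (hnn j')
    · have h := h1.symm.trans h2
      injection h with e1 e2
      exact hvinj e2
  have hsum0 : ∑ j : Fin l, (a (C.v (C.nxt j)) - a (C.v j)) = 0 := by
    rw [Finset.sum_sub_distrib]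
    have hbij : ∑ j : Fin l, a (C.v (C.nxt j)) = ∑ j : Fin l, a (C.v j) :=
      Fintype.sum_bijective _ (succAt_bij hl0) _ _ (fun j => rfl)
    rw [hbij, sub_self]
  have hterm : ∀ j, a (C.v (C.nxt j)) - a (C.v j) = if C.ε j = true then -c else c := by
    intro j
    have hS := hSa _ (hmemS j)
    by_cases hε : C.ε j = true
    · rw [if_pos hε]
      have harr : C.arrow j = (C.v j, C.v (C.nxt j)) := by
        unfold PreCycle.arrow; rw [if_pos hε]
      rw [harr] at hS
      simp only [Prod.fst, Prod.snd] at hS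
      linarith
    · rw [if_neg hε]
      have harr : C.arrow j = (C.v (C.nxt j), C.v j) := by
        unfold PreCycle.arrow; rw [if_neg hε]
      rw [harr] at hS
      simp only [Prod.fst, Prod.snd] at hS
      linarith
  rw [Finset.sum_congr rfl (fun j _ => hterm j), Finset.sum_ite,
    Finset.sum_const, Finset.sum_const] at hsum0
  have hcard : (Finset.univ.filter fun j : Fin l => C.ε j = true).card
      + (Finset.univ.filter fun j : Fin l => ¬ (C.ε j = true)).card = l := by
    rw [Finset.card_filter_add_card_filter_not]
    simp
  have hsum0' : ((Finset.univ.filter fun j : Fin l => C.ε j = true).card : ℝ) * (-c)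
      + ((Finset.univ.filter fun j : Fin l => ¬ (C.ε j = true)).card : ℝ) * c = 0 := by
    simpa [nsmul_eq_mul] using hsum0
  have htu : (((Finset.univ.filter fun j : Fin l => ¬ (C.ε j = true)).card : ℝ)
      - ((Finset.univ.filter fun j : Fin l => C.ε j = true).card : ℝ)) * c = 0 := by
    linear_combination hsum0'
  have htu2 : ((Finset.univ.filter fun j : Fin l => C.ε j = true).card : ℝ)
      = ((Finset.univ.filter fun j : Fin l => ¬ (C.ε j = true)).card : ℝ) := by
    rcases mul_eq_zero.mp htu with h | h
    · linarith
    · exact absurd h hc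
  have htu3 : (Finset.univ.filter fun j : Fin l => C.ε j = true).card
      = (Finset.univ.filter fun j : Fin l => ¬ (C.ε j = true)).card := by
    exact_mod_cast htu2
  refine ⟨C, hmemS, hainj, ?_⟩
  show 2 * (Finset.univ.filter fun j : Fin l => C.ε j = true).card = l
  omega

lemma part2 {d : ℕ} (A : Finset (Fin d × Fin d))
    (hsym : ∀ i j : Fin d, (i, j) ∈ A → (j, i) ∈ A)
    (h1 : ¬ ∃ C : PreCycle (Fin d), C.IsCycleIn A ∧ C.Homogeneous) :
    Simplicial (polyG A) := by
  classical
  intro F hF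
  obtain ⟨hExp, hFne, hdim⟩ := hF
  obtain ⟨f, hFeq⟩ := hExp hFne
  obtain ⟨x₀, hx₀⟩ := hFne
  have hx₀' : x₀ ∈ polyG A ∧ ∀ y ∈ polyG A, f y ≤ f x₀ := by
    have := hx₀; rw [hFeq] at this; exact this
  set c := f x₀ with hcdef
  set a : Fin d → ℝ := fun i => f (Pi.single i 1) with hadef
  have hfρ : ∀ e : Fin d × Fin d, f (rho e) = a e.1 - a e.2 := by
    intro e
    have hre : rho e = Pi.single e.1 1 - Pi.single e.2 1 := by
      funext k; simp [rho, Pi.single_apply]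
    rw [hre, map_sub]
  have hρP : ∀ e ∈ A, rho e ∈ polyG A := fun e he =>
    subset_convexHull ℝ _ ⟨e, he, rfl⟩
  have hFval : ∀ x ∈ F, f x = c := by
    intro x hx
    have hx' : x ∈ polyG A ∧ ∀ y ∈ polyG A, f y ≤ f x := by
      have := hx; rw [hFeq] at this; exact this
    exact le_antisymm (hx₀'.2 x hx'.1) (hx'.2 x₀ hx₀'.1)
  have hc : c ≠ 0 := by
    intro hc0
    have hall : ∀ y ∈ polyG A, f y = 0 := by
      intro y hy
      have hsub : polyG A ⊆ {y | f y = 0} := by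
        apply convexHull_min
        · rintro _ ⟨e, he, rfl⟩
          have h2 : f (rho e) ≤ 0 := hc0 ▸ hx₀'.2 _ (hρP e he)
          have h3 : f (rho (e.2, e.1)) ≤ 0 := hc0 ▸ hx₀'.2 _ (hρP _ (hsym _ _ he))
          rw [hfρ] at h2 h3
          simp only [Set.mem_setOf_eq]
          rw [hfρ]
          simp only at h3
          linarith
        · intro x hx y hy s t hs ht hst
          simp only [Set.mem_setOf_eq] at *
          rw [map_add, map_smul, map_smul, hx, hy]
          simp
      exact hsub hy
    have hFP : F = polyG A := by
      rw [hFeq]; ext x; constructor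
      · rintro ⟨h, _⟩; exact h
      · intro h; exact ⟨h, fun y hy => by rw [hall y hy, hall x h]⟩
    rw [hFP] at hdim
    omega
  have hsubP : F.extremePoints ℝ ⊆ (polyG A).extremePoints ℝ :=
    (hExp.isExtreme).extremePoints_subset_extremePoints
  have hexArr : ∀ x : ↥(F.extremePoints ℝ), ∃ e, e ∈ A ∧ rho e = x.val ∧
      a e.1 - a e.2 = c := by
    rintro ⟨x, hx⟩
    obtain ⟨e, he, hex⟩ := extremePoints_convexHull_subset (hsubP hx)
    refine ⟨e, he, hex, ?_⟩
    rw [← hfρ, hex]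
    exact hFval x hx.1
  choose g hg1 hg2 hg3 using hexArr
  have hginj : Function.Injective g := by
    intro x y h
    apply Subtype.ext
    rw [← hg2 x, ← hg2 y, h]
  -- affine independence via definition
  intro s w hw hvsub i his
  by_contra hwi
  rw [Finset.weightedVSub_eq_linear_combination s hw] at hvsub
  set s' := s.filter (fun i => w i ≠ 0) with hs'def
  have hsum' : ∑ i ∈ s', w i • rho (g i) = 0 := by
    rw [← hvsub]
    rw [Finset.sum_filter_of_ne]
    · apply Finset.sum_congr rfl
      intro i _
      rw [hg2 i]
    · intro i _ hne hwz
      apply hne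
      rw [hwz, zero_smul]
  set S := s'.image g with hSdef
  have hγmem : ∀ i ∈ s', w i ≠ 0 := fun i hi => (Finset.mem_filter.mp hi).2
  set γ : Fin d × Fin d → ℝ := fun e => ∑ i ∈ s', if g i = e then w i else 0 with hγdef
  have hγg : ∀ i ∈ s', γ (g i) = w i := by
    intro i hi
    show (∑ j ∈ s', if g j = g i then w j else 0) = w i
    rw [Finset.sum_eq_single i]
    · rw [if_pos rfl]
    · intro b hb hbi
      rw [if_neg (fun h => hbi (hginj h))]
    · intro h; exact absurd hi h
  have hSsum : ∑ e ∈ S, γ e • rho e = (0 : Fin d → ℝ) := by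
    have hinjS : ∀ x ∈ s', ∀ y ∈ s', g x = g y → x = y := fun x _ y _ h => hginj h
    have h2 : ∑ e ∈ S, γ e • rho e = ∑ i ∈ s', γ (g i) • rho (g i) :=
      Finset.sum_image hinjS
    rw [h2, ← hsum']
    apply Finset.sum_congr rfl
    intro i hi
    rw [hγg i hi]
  have hSne : S.Nonempty := ⟨g i, Finset.mem_image_of_mem g (Finset.mem_filter.mpr ⟨his, hwi⟩)⟩
  have hSa : ∀ e ∈ S, a e.1 - a e.2 = c := by
    intro e he
    obtain ⟨j, _, rfl⟩ := Finset.mem_image.mp he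
    exact hg3 j
  have hγne : ∀ e ∈ S, γ e ≠ 0 := by
    intro e he
    obtain ⟨j, hj, rfl⟩ := Finset.mem_image.mp he
    rw [hγg j hj]
    exact hγmem j hj
  obtain ⟨C, hCmem, hCinj, hChom⟩ := key_cycle a c hc S hSne hSa γ hγne hSsum
  have hSA : ∀ e ∈ S, e ∈ A := by
    intro e he
    obtain ⟨j, _, rfl⟩ := Finset.mem_image.mp he
    exact hg1 j
  exact h1 ⟨C, ⟨fun j => hSA _ (hCmem j), hCinj⟩, hChom⟩

lemma reach_chain {X : Type*} (Γ : SimpleGraph X) (f : ℕ → X) {N : ℕ}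
    (hadj : ∀ i, i < N → Γ.Adj (f i) (f (i+1))) : ∀ k, k ≤ N → Γ.Reachable (f 0) (f k) := by
  intro k
  induction k with
  | zero => intro _; exact SimpleGraph.Reachable.refl _
  | succ k ih => intro h; exact (ih (by omega)).trans (hadj k (by omega)).reachable

lemma no_homog {d : ℕ} (A : Finset (Fin d × Fin d))
    (hb : ∀ H : (SimpleGraph.fromRel fun i j : Fin d => (i, j) ∈ A).Subgraph,
      IsBlock _ H → IsSingleEdge _ H ∨ IsOddCycleSub _ H) :
    ¬ ∃ C : PreCycle (Fin d), C.IsCycleIn A ∧ C.Homogeneous := by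
  classical
  rintro ⟨C, ⟨hmem, hinj⟩, hhom⟩
  set G := (SimpleGraph.fromRel fun i j : Fin d => (i, j) ∈ A) with hGdef
  have hl2 : 2 ≤ C.l := C.two_le
  have hhom' : 2 * (Finset.univ.filter fun j => C.ε j = true).card = C.l := hhom
  have hlne2 : C.l ≠ 2 := by
    intro h2
    have h0 : (0:ℕ) < C.l := by omega
    have h1 : (1:ℕ) < C.l := by omega
    have hn0 : C.nxt ⟨0, h0⟩ = ⟨1, h1⟩ := by
      apply Fin.ext
      show (0 + 1) % C.l = 1
      rw [h2]
    have hn1 : C.nxt ⟨1, h1⟩ = ⟨0, h0⟩ := by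
      apply Fin.ext
      show (1 + 1) % C.l = 0
      rw [h2]
    have hne01 : (⟨0, h0⟩ : Fin C.l) ≠ ⟨1, h1⟩ := by
      intro h
      have : (0:ℕ) = 1 := congrArg Fin.val h
      omega
    have hcard : (Finset.univ.filter fun j => C.ε j = true).card = 1 := by omega
    by_cases h0t : C.ε ⟨0, h0⟩ = true <;> by_cases h1t : C.ε ⟨1, h1⟩ = true
    · have : 1 < (Finset.univ.filter fun j => C.ε j = true).card :=
        Finset.one_lt_card.mpr ⟨⟨0, h0⟩, by simp [h0t], ⟨1, h1⟩, by simp [h1t], hne01⟩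
      omega
    · have e0 : C.arrow ⟨0, h0⟩ = (C.v ⟨0, h0⟩, C.v ⟨1, h1⟩) := by
        unfold PreCycle.arrow; rw [if_pos h0t, hn0]
      have e1 : C.arrow ⟨1, h1⟩ = (C.v ⟨0, h0⟩, C.v ⟨1, h1⟩) := by
        unfold PreCycle.arrow; rw [if_neg h1t, hn1]
      exact hne01 (hinj (e0.trans e1.symm))
    · have e0 : C.arrow ⟨0, h0⟩ = (C.v ⟨1, h1⟩, C.v ⟨0, h0⟩) := by
        unfold PreCycle.arrow; rw [if_neg h0t, hn0]
      have e1 : C.arrow ⟨1, h1⟩ = (C.v ⟨1, h1⟩, C.v ⟨0, h0⟩) := by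
        unfold PreCycle.arrow; rw [if_pos h1t, hn1]
      exact hne01 (hinj (e0.trans e1.symm))
    · have hallf : ∀ j, ¬ (C.ε j = true) := by
        intro j
        have hj01 : j = ⟨0, h0⟩ ∨ j = ⟨1, h1⟩ := by
          have := j.isLt
          rcases (by omega : j.val = 0 ∨ j.val = 1) with h | h
          · left; exact Fin.ext h
          · right; exact Fin.ext h
        rcases hj01 with rfl | rfl <;> assumption
      have hempty : (Finset.univ.filter fun j => C.ε j = true) = ∅ :=
        Finset.filter_eq_empty_iff.mpr (fun j _ => hallf j)
      rw [hempty] at hcard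
      simp at hcard
  have hl4 : 4 ≤ C.l := by omega
  have hl0 : 0 < C.l := by omega
  have hvne : ∀ j : Fin C.l, C.v j ≠ C.v (C.nxt j) := by
    intro j h
    exact succAt_ne hl2 j (C.inj h).symm
  have hadj : ∀ j, G.Adj (C.v j) (C.v (C.nxt j)) := by
    intro j
    have hm := hmem j
    rw [hGdef, SimpleGraph.fromRel_adj]
    refine ⟨hvne j, ?_⟩
    unfold PreCycle.arrow at hm
    by_cases hε : C.ε j = true
    · rw [if_pos hε] at hm; exact Or.inl hm
    · rw [if_neg hε] at hm; exact Or.inr hm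
  let H₀ : G.Subgraph :=
    { verts := Set.range C.v
      Adj := fun x y => ∃ j, (x = C.v j ∧ y = C.v (C.nxt j)) ∨ (y = C.v j ∧ x = C.v (C.nxt j))
      adj_sub := by
        rintro x y ⟨j, ⟨rfl, rfl⟩ | ⟨rfl, rfl⟩⟩
        · exact hadj j
        · exact (hadj j).symm
      edge_vert := by
        rintro x y ⟨j, ⟨rfl, -⟩ | ⟨-, rfl⟩⟩
        · exact ⟨j, rfl⟩
        · exact ⟨C.nxt j, rfl⟩
      symm := by
        refine ⟨?_⟩; rintro x y ⟨j, h | h⟩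
        · exact ⟨j, Or.inr h⟩
        · exact ⟨j, Or.inl h⟩ }
  have hH₀verts : H₀.verts = Set.range C.v := rfl
  have hH₀adj : ∀ j, H₀.Adj (C.v j) (C.v (C.nxt j)) := fun j => ⟨j, Or.inl ⟨rfl, rfl⟩⟩
  have hncard : (Set.range C.v).ncard = C.l := by
    rw [← Set.image_univ, Set.ncard_image_of_injective _ C.inj, Set.ncard_univ,
      Nat.card_eq_fintype_card, Fintype.card_fin]
  have htc : TwoConn G H₀ := by
    constructor
    · rw [hH₀verts, hncard]; omega
    · intro w₀
      have hmex : ∃ m : Fin C.l, C.v m = w₀ ∨ w₀ ∉ Set.range C.v := by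
        by_cases h : w₀ ∈ Set.range C.v
        · obtain ⟨m, hm⟩ := h; exact ⟨m, Or.inl hm⟩
        · exact ⟨⟨0, hl0⟩, Or.inr h⟩
      obtain ⟨m, hmcase⟩ := hmex
      set D := H₀.deleteVerts {w₀} with hDdef
      have hDverts : D.verts = Set.range C.v \ {w₀} := rfl
      set W : ℕ → Fin d := fun k => C.v ⟨k % C.l, Nat.mod_lt _ hl0⟩ with hWdef
      have hWadj : ∀ k, H₀.Adj (W k) (W (k+1)) := by
        intro k
        refine ⟨⟨k % C.l, Nat.mod_lt _ hl0⟩, Or.inl ⟨rfl, ?_⟩⟩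
        show C.v ⟨(k+1) % C.l, _⟩ = C.v (C.nxt _)
        apply congrArg
        apply Fin.ext
        show (k+1) % C.l = (k % C.l + 1) % C.l
        rw [Nat.mod_add_mod]
      have hWrange : ∀ k, W k ∈ Set.range C.v := fun k => ⟨_, rfl⟩
      have hWne : ∀ i, 1 ≤ i → i ≤ C.l - 1 → W (m.val + i) ≠ w₀ := by
        intro i h1 h2 hEq
        rcases hmcase with hcase | hcase
        · have hfin : (⟨(m.val + i) % C.l, Nat.mod_lt _ hl0⟩ : Fin C.l) = m :=
            C.inj (hEq.trans hcase.symm)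
          have hv : (m.val + i) % C.l = m.val := congrArg Fin.val hfin
          have hmlt := m.isLt
          rcases (by omega : m.val + i < C.l ∨ (C.l ≤ m.val + i ∧ m.val + i < 2 * C.l)) with h | h
          · rw [Nat.mod_eq_of_lt h] at hv; omega
          · rw [Nat.mod_eq_sub_mod h.1, Nat.mod_eq_of_lt (by omega)] at hv; omega
        · exact hcase (hEq ▸ hWrange (m.val + i))
      have hmain : ∀ N : ℕ, (∀ k, k ≤ N → W (m.val + 1 + k) ≠ w₀) →
          (∀ z : ↥D.verts, ∃ k, k ≤ N ∧ W (m.val + 1 + k) = z.val) → D.coe.Connected := by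
        intro N hmemN hcover
        have hmemW : ∀ k, k ≤ N → W (m.val + 1 + k) ∈ D.verts := by
          intro k hk
          rw [hDverts]
          exact ⟨hWrange _, hmemN k hk⟩
        set f : ℕ → ↥D.verts := fun k => ⟨W (m.val + 1 + min k N), hmemW _ (min_le_right _ _)⟩
          with hfdef
        have hfadj : ∀ i, i < N → D.coe.Adj (f i) (f (i+1)) := by
          intro i hi
          show D.Adj (W (m.val + 1 + min i N)) (W (m.val + 1 + min (i+1) N))
          rw [min_eq_left (by omega), min_eq_left (by omega)]
          rw [SimpleGraph.Subgraph.deleteVerts_adj]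
          refine ⟨(hmemW i (by omega)).1, (hmemW i (by omega)).2,
            (hmemW (i+1) (by omega)).1, (hmemW (i+1) (by omega)).2, ?_⟩
          have he : m.val + 1 + (i + 1) = m.val + 1 + i + 1 := by omega
          rw [he]
          exact hWadj (m.val + 1 + i)
        rw [SimpleGraph.connected_iff]
        refine ⟨?_, ⟨f 0⟩⟩
        intro x y
        obtain ⟨kx, hkx, hfx⟩ := hcover x
        obtain ⟨ky, hky, hfy⟩ := hcover y
        have hx : f kx = x := Subtype.ext (by
          show W (m.val + 1 + min kx N) = x.val
          rw [min_eq_left hkx]; exact hfx)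
        have hy : f ky = y := Subtype.ext (by
          show W (m.val + 1 + min ky N) = y.val
          rw [min_eq_left hky]; exact hfy)
        have r1 := reach_chain D.coe f hfadj kx hkx
        have r2 := reach_chain D.coe f hfadj ky hky
        rw [hx] at r1
        rw [hy] at r2
        exact r1.symm.trans r2
      have hcov : ∀ z : ↥D.verts, ∃ jz : Fin C.l, C.v jz = z.val ∧ z.val ≠ w₀ := by
        intro z
        have hz : z.val ∈ Set.range C.v \ {w₀} := z.2
        obtain ⟨⟨jz, hjz⟩, hzw⟩ := hz
        exact ⟨jz, hjz, hzw⟩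
      have hWcomp : ∀ jz : Fin C.l, ∀ k, (m.val + 1 + k) % C.l = jz.val → W (m.val + 1 + k) = C.v jz := by
        intro jz k hk
        show C.v _ = C.v jz
        apply congrArg
        exact Fin.ext hk
      rcases hmcase with hcase | hcase
      · -- w₀ = C.v m
        apply hmain (C.l - 2)
        · intro k hk
          have h := hWne (1 + k) (by omega) (by omega)
          rwa [← Nat.add_assoc] at h
        · intro z
          obtain ⟨jz, hjz, hzw⟩ := hcov z
          have hjm : jz ≠ m := by
            intro h
            exact hzw (by rw [← hjz, h, hcase])
          have hjmv : jz.val ≠ m.val := fun h => hjm (Fin.ext h)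
          have hjlt := jz.isLt
          have hmlt := m.isLt
          rcases Nat.lt_or_ge m.val jz.val with h | h
          · refine ⟨jz.val - m.val - 1, by omega, ?_⟩
            rw [hWcomp jz _ ?_]
            · exact hjz
            · have he : m.val + 1 + (jz.val - m.val - 1) = jz.val := by omega
              rw [he, Nat.mod_eq_of_lt hjlt]
          · refine ⟨jz.val + C.l - m.val - 1, by omega, ?_⟩
            rw [hWcomp jz _ ?_]
            · exact hjz
            · have he : m.val + 1 + (jz.val + C.l - m.val - 1) = jz.val + C.l := by omega
              rw [he, Nat.add_mod_right, Nat.mod_eq_of_lt hjlt]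
      · -- w₀ not on the cycle
        apply hmain (C.l - 1)
        · intro k hk hEq
          exact hcase (hEq ▸ hWrange _)
        · intro z
          obtain ⟨jz, hjz, hzw⟩ := hcov z
          have hjlt := jz.isLt
          have hmlt := m.isLt
          rcases Nat.lt_or_ge m.val jz.val with h | h
          · refine ⟨jz.val - m.val - 1, by omega, ?_⟩
            rw [hWcomp jz _ ?_]
            · exact hjz
            · have he : m.val + 1 + (jz.val - m.val - 1) = jz.val := by omega
              rw [he, Nat.mod_eq_of_lt hjlt]
          · refine ⟨jz.val + C.l - m.val - 1, by omega, ?_⟩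
            rw [hWcomp jz _ ?_]
            · exact hjz
            · have he : m.val + 1 + (jz.val + C.l - m.val - 1) = jz.val + C.l := by omega
              rw [he, Nat.add_mod_right, Nat.mod_eq_of_lt hjlt]
  -- maximal two-connected subgraph
  have hfinsub : Finite G.Subgraph := by
    have hinj2 : Function.Injective (fun H : G.Subgraph => (H.verts, H.Adj)) := by
      intro H1 H2 h
      rw [Prod.mk.injEq] at h
      exact SimpleGraph.Subgraph.ext h.1 h.2
    exact Finite.of_injective _ hinj2
  obtain ⟨Hm, hHmmem, hmax⟩ := Set.Finite.exists_maximalFor id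
    {H' : G.Subgraph | TwoConn G H' ∧ H₀ ≤ H'} (Set.toFinite _) ⟨H₀, htc, le_refl H₀⟩
  obtain ⟨htcHm, hleHm⟩ := hHmmem
  have hblock : IsBlock G Hm := by
    refine ⟨htcHm, ?_⟩
    intro H' htc' hle'
    exact le_antisymm (hmax (j := H') ⟨htc', le_trans hleHm hle'⟩ hle') hle'
  rcases hb Hm hblock with hse | hoc
  · -- single edge: impossible
    obtain ⟨x, y, hxy, rfl⟩ := hse
    have hsub : Set.range C.v ⊆ {x, y} := hleHm.1
    have h0 := hsub ⟨(⟨0, by omega⟩ : Fin C.l), rfl⟩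
    have h1 := hsub ⟨(⟨1, by omega⟩ : Fin C.l), rfl⟩
    have h2 := hsub ⟨(⟨2, by omega⟩ : Fin C.l), rfl⟩
    have hne01 : C.v ⟨0, by omega⟩ ≠ C.v (⟨1, by omega⟩ : Fin C.l) :=
      fun h => absurd (congrArg Fin.val (C.inj h)) (by simp)
    have hne02 : C.v ⟨0, by omega⟩ ≠ C.v (⟨2, by omega⟩ : Fin C.l) :=
      fun h => absurd (congrArg Fin.val (C.inj h)) (by simp)
    have hne12 : C.v ⟨1, by omega⟩ ≠ C.v (⟨2, by omega⟩ : Fin C.l) :=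
      fun h => absurd (congrArg Fin.val (C.inj h)) (by simp)
    simp only [Set.mem_insert_iff, Set.mem_singleton_iff] at h0 h1 h2
    rcases h0 with h0 | h0 <;> rcases h1 with h1 | h1 <;> rcases h2 with h2 | h2 <;>
      first
        | exact hne01 (h0.trans h1.symm)
        | exact hne02 (h0.trans h2.symm)
        | exact hne12 (h1.trans h2.symm)
  · -- odd cycle: impossible
    obtain ⟨l', hl'3, v', hodd, hinj', hverts, hadj'⟩ := hoc
    have hφex : ∀ j : Fin C.l, ∃ t : Fin l', v' t = C.v j := by
      intro j
      have hmem' : C.v j ∈ Hm.verts := hleHm.1 ⟨j, rfl⟩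
      rw [hverts] at hmem'
      exact hmem'
    choose φ hφv using hφex
    have hφinj : Function.Injective φ := by
      intro i j h
      apply C.inj
      rw [← hφv i, ← hφv j, h]
    have hl'0 : 0 < l' := by omega
    have hstep : ∀ j, φ (C.nxt j) = succAt hl'0 (φ j) ∨ φ j = succAt hl'0 (φ (C.nxt j)) := by
      intro j
      have hA : Hm.Adj (C.v j) (C.v (C.nxt j)) := hleHm.2 (hH₀adj j)
      rw [hadj'] at hA
      obtain ⟨t, ⟨ht1, ht2⟩ | ⟨ht1, ht2⟩⟩ := hA
      · left
        have e1 : φ j = t := hinj' ((hφv j).trans ht1)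
        apply hinj'
        rw [hφv (C.nxt j), ht2, e1]
      · right
        have e1 : φ (C.nxt j) = t := hinj' ((hφv (C.nxt j)).trans ht1)
        apply hinj'
        rw [hφv j, ht2, e1]
    have hCnn : ∀ j : Fin C.l, C.nxt (C.nxt j) ≠ j := fun j => succAt_succAt_ne (by omega) j
    have hstep2 : ∀ j, (φ j = succAt hl'0 (φ (C.nxt j))) →
        (φ (C.nxt j) = succAt hl'0 (φ (C.nxt (C.nxt j)))) := by
      intro j hj
      rcases hstep (C.nxt j) with h | h
      · exfalso
        have hh : φ j = φ (C.nxt (C.nxt j)) := by rw [hj, h]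
        exact hCnn j (hφinj hh).symm
      · exact h
    have hiterC : ∀ (k : ℕ) (j : Fin C.l),
        (C.nxt)^[k] j = ⟨(j.val + k) % C.l, Nat.mod_lt _ hl0⟩ :=
      fun k j => succAt_iterate hl0 j k
    have hfix : ∀ j : Fin C.l, (C.nxt)^[C.l] j = j := by
      intro j
      rw [hiterC]
      apply Fin.ext
      show (j.val + C.l) % C.l = j.val
      rw [Nat.add_mod_right, Nat.mod_eq_of_lt j.isLt]
    have hdvd : l' ∣ C.l := by
      have hmain2 : ∃ x : Fin l', (succAt hl'0)^[C.l] x = x := by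
        by_cases hall : ∀ j, φ (C.nxt j) = succAt hl'0 (φ j)
        · have hk : ∀ (k : ℕ) (j : Fin C.l), φ ((C.nxt)^[k] j) = (succAt hl'0)^[k] (φ j) := by
            intro k
            induction k with
            | zero => intro j; rfl
            | succ k ih =>
                intro j
                rw [Function.iterate_succ_apply', Function.iterate_succ_apply', hall, ih]
          refine ⟨φ ⟨0, hl0⟩, ?_⟩
          rw [← hk C.l ⟨0, hl0⟩, hfix]
        · push_neg at hall
          obtain ⟨j₀, hj₀⟩ := hall
          have hbase : φ j₀ = succAt hl'0 (φ (C.nxt j₀)) := (hstep j₀).resolve_left hj₀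
          have hall2 : ∀ (k : ℕ), φ ((C.nxt)^[k] j₀) = succAt hl'0 (φ (C.nxt ((C.nxt)^[k] j₀))) := by
            intro k
            induction k with
            | zero => exact hbase
            | succ k ih =>
                rw [Function.iterate_succ_apply']
                exact hstep2 _ ih
          have hall2' : ∀ j, φ j = succAt hl'0 (φ (C.nxt j)) := by
            intro j
            obtain ⟨k, hk⟩ : ∃ k, (C.nxt)^[k] j₀ = j := by
              refine ⟨C.l + j.val - j₀.val, ?_⟩
              rw [hiterC]
              apply Fin.ext
              show (j₀.val + (C.l + j.val - j₀.val)) % C.l = j.val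
              have hj₀lt := j₀.isLt
              have he : j₀.val + (C.l + j.val - j₀.val) = C.l + j.val := by omega
              rw [he, Nat.add_mod_left, Nat.mod_eq_of_lt j.isLt]
            rw [← hk]
            exact hall2 k
          have hk2 : ∀ (k : ℕ) (j : Fin C.l), φ j = (succAt hl'0)^[k] (φ ((C.nxt)^[k] j)) := by
            intro k
            induction k with
            | zero => intro j; rfl
            | succ k ih =>
                intro j
                have h1 := ih j
                have h2 := hall2' ((C.nxt)^[k] j)
                rw [h2] at h1
                rw [h1, ← Function.iterate_succ_apply (succAt hl'0) k,
                  ← Function.iterate_succ_apply' C.nxt k j]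
          refine ⟨φ ⟨0, hl0⟩, ?_⟩
          have hh := hk2 C.l ⟨0, hl0⟩
          rw [hfix] at hh
          exact hh.symm
      obtain ⟨x, hx⟩ := hmain2
      rw [succAt_iterate hl'0 x C.l] at hx
      have hv : (x.val + C.l) % l' = x.val := congrArg Fin.val hx
      have hxlt := x.isLt
      have hmeq : x.val % l' = (x.val + C.l) % l' := by
        rw [hv, Nat.mod_eq_of_lt hxlt]
      have hd := (Nat.modEq_iff_dvd' (Nat.le_add_right x.val C.l)).mp hmeq
      have he : x.val + C.l - x.val = C.l := by omega
      rwa [he] at hd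
    have hlel : C.l ≤ l' := by
      have hcard := Fintype.card_le_of_injective φ hφinj
      simpa using hcard
    have hge : l' ≤ C.l := Nat.le_of_dvd (by omega) hdvd
    have heq : l' = C.l := le_antisymm hge hlel
    have heven : Even C.l := ⟨(Finset.univ.filter fun j => C.ε j = true).card, by omega⟩
    rw [heq] at hodd
    exact (Nat.not_odd_iff_even.mpr heven) hodd

/-- if `G` is a connected symmetric directed graph each of whose
two-connected components (of the underlying undirected graph) is a single edge or an
odd cycle, then `G` has no homogeneous cycle and `P_G` is simplicial. -/
theorem stmt13 {d : ℕ} (A : Finset (Fin d × Fin d)) (hconn : GConnected A)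
    (hsym : ∀ i j : Fin d, (i, j) ∈ A → (j, i) ∈ A)
    (hb : ∀ H : (SimpleGraph.fromRel fun i j : Fin d => (i, j) ∈ A).Subgraph,
      IsBlock _ H → IsSingleEdge _ H ∨ IsOddCycleSub _ H) :
    (¬ ∃ C : PreCycle (Fin d), C.IsCycleIn A ∧ C.Homogeneous) ∧
      Simplicial (polyG A) := by
  have h1 := no_homog A hb
  exact ⟨h1, part2 A hsym h1⟩
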